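/- Let ẙ₁,…,ẙ_N ∈ ℝ⁴ be unit vectors and k₁,…,k_N > 0. Suppose there exist indices j₁, j₂, j₃ with ẙ_{j₁,4} ≠ 0, ẙ_{j₂,4} ≠ 0, ẙ_{j₃,4} ≠ 0 and ẙ_{j₁}, ẙ_{j₂}, ẙ_{j₃} pairwise linearly independent in ℝ⁴, and such that the three vectors v_{j₁₂} := ẙ_{j₂,4}·ẙ̄_{j₁} − ẙ_{j₁,4}·ẙ̄_{j₂}, v_{j₂₃} := ẙ_{j₃,4}·ẙ̄_{j₂} − ẙ_{j₂,4}·ẙ̄_{j₃}, v_{j₃₁} := ẙ_{j₁,4}·ẙ̄_{j₃} − ẙ_{j₃,4}·ẙ̄_{j₁} are not all collinear (their span in ℝ³ has dimension at least 2) (Case 3 of the observability assumption: at least 3 position measurements). Then for every E ∈ SE(3), V(E) = 0 if and only if E = I₄; i.e. V has a unique global minimum at the identity. -/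

import Mathlib

open Matrix BigOperators

noncomputable section

/-- The Euclidean norm of a vector in `ℝⁿ`. -/
def enorm2 {n : ℕ} (x : Fin n → ℝ) : ℝ := Real.sqrt (∑ i, x i ^ 2)

/-- Normalization of a vector: `x / |x|`. -/
def nrm {n : ℕ} (x : Fin n → ℝ) : Fin n → ℝ := (enorm2 x)⁻¹ • x

/-- `R ∈ SO(3)`: rotation matrices. -/
def SO3 (R : Matrix (Fin 3) (Fin 3) ℝ) : Prop := Rᵀ * R = 1 ∧ R.det = 1

/-- The 4×4 block matrix `[[M, m],[0ᵀ, 0]]`. -/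
def blk (M : Matrix (Fin 3) (Fin 3) ℝ) (m : Fin 3 → ℝ) : Matrix (Fin 4) (Fin 4) ℝ :=
  fun i j =>
    if h : (i : ℕ) < 3 then
      if h' : (j : ℕ) < 3 then M ⟨i, h⟩ ⟨j, h'⟩ else m ⟨i, h⟩
    else 0

/-- The 4×4 block matrix `[[R, p],[0ᵀ, 1]]`. -/
def toSE3 (R : Matrix (Fin 3) (Fin 3) ℝ) (p : Fin 3 → ℝ) : Matrix (Fin 4) (Fin 4) ℝ :=
  fun i j =>
    if h : (i : ℕ) < 3 then
      if h' : (j : ℕ) < 3 then R ⟨i, h⟩ ⟨j, h'⟩ else p ⟨i, h⟩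
    else if (j : ℕ) < 3 then 0 else 1

/-- The Special Euclidean group SE(3), as a subset of `ℝ^{4×4}`. -/
def SE3 : Set (Matrix (Fin 4) (Fin 4) ℝ) := {X | ∃ R p, SO3 R ∧ X = toSE3 R p}

/-- The skew-symmetric matrix `ω_×` associated with the cross product by `ω`. -/
def crossMat (ω : Fin 3 → ℝ) : Matrix (Fin 3) (Fin 3) ℝ :=
  !![0, -ω 2, ω 1; ω 2, 0, -ω 0; -ω 1, ω 0, 0]

/-- The cross product on `ℝ³`. -/
def cross3 (u v : Fin 3 → ℝ) : Fin 3 → ℝ :=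
  ![u 1 * v 2 - u 2 * v 1, u 2 * v 0 - u 0 * v 2, u 0 * v 1 - u 1 * v 0]

/-- The Lie algebra se(3), as a subset of `ℝ^{4×4}`. -/
def se3 : Set (Matrix (Fin 4) (Fin 4) ℝ) := {A | ∃ ω V, A = blk (crossMat ω) V}

/-- The projection `P : ℝ^{4×4} → se(3)`:
`P([[M₁, m₂],[m₃ᵀ, m₄]]) = [[(M₁ − M₁ᵀ)/2, m₂],[0ᵀ, 0]]`. -/
def projP (M : Matrix (Fin 4) (Fin 4) ℝ) : Matrix (Fin 4) (Fin 4) ℝ :=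
  fun i j =>
    if (i : ℕ) < 3 then (if (j : ℕ) < 3 then (M i j - M j i) / 2 else M i j) else 0

/-- The trace (Frobenius) inner product `⟨M₁, M₂⟩ = tr(M₁ᵀ M₂)`. -/
def mip (M₁ M₂ : Matrix (Fin 4) (Fin 4) ℝ) : ℝ := (M₁ᵀ * M₂).trace

/-- First three components of a vector in `ℝ⁴`. -/
def vbar (x : Fin 4 → ℝ) : Fin 3 → ℝ := fun i => x (Fin.castSucc i)

/-- The vector `[v; c] ∈ ℝ⁴`. -/
def vec4 (v : Fin 3 → ℝ) (c : ℝ) : Fin 4 → ℝ := Fin.snoc v c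

/-- The innovation term `Δ(X̂, Y) = −P(Σᵢ kᵢ (I₄ − eᵢeᵢᵀ) ẙᵢ eᵢᵀ)` where
`eᵢ = X̂yᵢ/|X̂yᵢ|`. -/
def innov {N : ℕ} (k : Fin N → ℝ) (ystar y : Fin N → Fin 4 → ℝ)
    (Xh : Matrix (Fin 4) (Fin 4) ℝ) : Matrix (Fin 4) (Fin 4) ℝ :=
  -projP (∑ i, k i •
    ((1 - vecMulVec (nrm (Xh *ᵥ y i)) (nrm (Xh *ᵥ y i))) *
      vecMulVec (ystar i) (nrm (Xh *ᵥ y i))))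


/-! ### Auxiliary lemmas -/

lemma enorm2_eq_zero' {n : ℕ} {x : Fin n → ℝ} : enorm2 x = 0 ↔ x = 0 := by
  unfold enorm2
  rw [Real.sqrt_eq_zero (Finset.sum_nonneg fun i _ => sq_nonneg _)]
  constructor
  · intro h
    funext i
    have := (Finset.sum_eq_zero_iff_of_nonneg (fun i _ => sq_nonneg (x i))).1 h i (Finset.mem_univ i)
    exact pow_eq_zero_iff (two_ne_zero) |>.1 this
  · intro h; simp [h]

lemma iso_dot' {R : Matrix (Fin 3) (Fin 3) ℝ} (hR : Rᵀ * R = 1) (x y : Fin 3 → ℝ) :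
    (R *ᵥ x) ⬝ᵥ (R *ᵥ y) = x ⬝ᵥ y := by
  rw [dotProduct_mulVec, ← Matrix.vecMul_transpose, Matrix.vecMul_vecMul, hR,
    Matrix.vecMul_one]

lemma cross3_ne_zero' {u v : Fin 3 → ℝ} (h : LinearIndependent ℝ ![u, v]) :
    cross3 u v ≠ 0 := by
  intro hw
  rw [linearIndependent_fin2] at h
  obtain ⟨hv, hav⟩ := h
  simp only [Matrix.cons_val_one, Matrix.head_cons, Matrix.cons_val_zero] at hv hav
  have e0 : u 1 * v 2 - u 2 * v 1 = 0 := congrFun hw 0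
  have e1 : u 2 * v 0 - u 0 * v 2 = 0 := congrFun hw 1
  have e2 : u 0 * v 1 - u 1 * v 0 = 0 := congrFun hw 2
  have : v 0 ≠ 0 ∨ v 1 ≠ 0 ∨ v 2 ≠ 0 := by
    by_contra hc
    push_neg at hc
    exact hv (funext fun i => by fin_cases i; exacts [hc.1, hc.2.1, hc.2.2])
  rcases this with h0 | h1 | h2
  · refine hav (u 0 / v 0) (funext fun i => ?_)
    fin_cases i
    · show u 0 / v 0 * v 0 = u 0; field_simp
    · show u 0 / v 0 * v 1 = u 1; field_simp; nlinarith
    · show u 0 / v 0 * v 2 = u 2; field_simp; nlinarith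
  · refine hav (u 1 / v 1) (funext fun i => ?_)
    fin_cases i
    · show u 1 / v 1 * v 0 = u 0; field_simp; nlinarith
    · show u 1 / v 1 * v 1 = u 1; field_simp
    · show u 1 / v 1 * v 2 = u 2; field_simp; nlinarith
  · refine hav (u 2 / v 2) (funext fun i => ?_)
    fin_cases i
    · show u 2 / v 2 * v 0 = u 0; field_simp; nlinarith
    · show u 2 / v 2 * v 1 = u 1; field_simp; nlinarith
    · show u 2 / v 2 * v 2 = u 2; field_simp

lemma vec111_eq' : (![1, 1, 1] : Fin 3 → ℝ) = fun _ => 1 := by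
  funext i; fin_cases i <;> rfl

lemma so3_fix' {R : Matrix (Fin 3) (Fin 3) ℝ} (hR : SO3 R) {u v : Fin 3 → ℝ}
    (hu : R *ᵥ u = u) (hv : R *ᵥ v = v) (hind : LinearIndependent ℝ ![u, v]) : R = 1 := by
  obtain ⟨horth, hdet⟩ := hR
  set w := cross3 u v with hwdef
  have hw : w ≠ 0 := cross3_ne_zero' hind
  have hw0 : w 0 = u 1 * v 2 - u 2 * v 1 := rfl
  have hw1 : w 1 = u 2 * v 0 - u 0 * v 2 := rfl
  have hw2 : w 2 = u 0 * v 1 - u 1 * v 0 := rfl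
  set M : Matrix (Fin 3) (Fin 3) ℝ := Matrix.of fun i j => ![u, v, w] j i with hM
  have hdetM : M.det = w ⬝ᵥ w := by
    rw [Matrix.det_fin_three]
    simp [hM, dotProduct, Fin.sum_univ_three]
    rw [hw0, hw1, hw2]
    ring
  have hww : w ⬝ᵥ w ≠ 0 := by
    intro h
    apply hw
    funext i
    have := (Finset.sum_eq_zero_iff_of_nonneg
      (fun j (_ : j ∈ Finset.univ) => mul_self_nonneg (w j))).1 h i (Finset.mem_univ i)
    exact mul_self_eq_zero.1 this
  have hMdet : M.det ≠ 0 := by rw [hdetM]; exact hww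
  have hMunit : IsUnit M.det := isUnit_iff_ne_zero.2 hMdet
  have hwu : w ⬝ᵥ u = 0 := by
    simp [dotProduct, Fin.sum_univ_three, hw0, hw1, hw2]; ring
  have hwv : w ⬝ᵥ v = 0 := by
    simp [dotProduct, Fin.sum_univ_three, hw0, hw1, hw2]; ring
  set z := R *ᵥ w with hz
  have hzu : z ⬝ᵥ u = 0 := by rw [hz, ← hu, iso_dot' horth, hwu]
  have hzv : z ⬝ᵥ v = 0 := by rw [hz, ← hv, iso_dot' horth, hwv]
  set a := M⁻¹ *ᵥ z with ha
  have hMa : M *ᵥ a = z := by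
    rw [ha, Matrix.mulVec_mulVec, Matrix.mul_nonsing_inv M hMunit, Matrix.one_mulVec]
  have hcomb : ∀ i, z i = a 0 * u i + a 1 * v i + a 2 * w i := by
    intro i
    rw [← hMa]
    simp [Matrix.mulVec, dotProduct, Fin.sum_univ_three, hM]
    ring
  have e1 : a 0 * (u ⬝ᵥ u) + a 1 * (u ⬝ᵥ v) = 0 := by
    have h := hzu
    simp only [dotProduct, Fin.sum_univ_three] at h ⊢
    rw [hcomb 0, hcomb 1, hcomb 2] at h
    have huw : u 0 * w 0 + u 1 * w 1 + u 2 * w 2 = 0 := by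
      simpa [dotProduct, Fin.sum_univ_three, mul_comm] using hwu
    linear_combination h - a 2 * huw
  have e2 : a 0 * (u ⬝ᵥ v) + a 1 * (v ⬝ᵥ v) = 0 := by
    have h := hzv
    simp only [dotProduct, Fin.sum_univ_three] at h ⊢
    rw [hcomb 0, hcomb 1, hcomb 2] at h
    have hvw : v 0 * w 0 + v 1 * w 1 + v 2 * w 2 = 0 := by
      simpa [dotProduct, Fin.sum_univ_three, mul_comm] using hwv
    linear_combination h - a 2 * hvw
  have lagrange : (u ⬝ᵥ u) * (v ⬝ᵥ v) - (u ⬝ᵥ v) * (u ⬝ᵥ v) = w ⬝ᵥ w := by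
    simp only [dotProduct, Fin.sum_univ_three, hw0, hw1, hw2]
    ring
  have ha0 : a 0 = 0 := by
    have h : a 0 * ((u ⬝ᵥ u) * (v ⬝ᵥ v) - (u ⬝ᵥ v) * (u ⬝ᵥ v)) = 0 := by
      linear_combination (v ⬝ᵥ v) * e1 - (u ⬝ᵥ v) * e2
    rw [lagrange] at h
    exact (mul_eq_zero.1 h).resolve_right hww
  have ha1 : a 1 = 0 := by
    have h : a 1 * ((u ⬝ᵥ u) * (v ⬝ᵥ v) - (u ⬝ᵥ v) * (u ⬝ᵥ v)) = 0 := by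
      linear_combination (u ⬝ᵥ u) * e2 - (u ⬝ᵥ v) * e1
    rw [lagrange] at h
    exact (mul_eq_zero.1 h).resolve_right hww
  have hzw : R *ᵥ w = fun i => a 2 * w i := by
    funext i
    rw [← hz, hcomb i, ha0, ha1]
    ring
  set D : Matrix (Fin 3) (Fin 3) ℝ := Matrix.diagonal ![1, 1, a 2] with hD
  have hRM : R * M = M * D := by
    ext i j
    fin_cases j
    · show (R * M) i 0 = (M * D) i 0
      have : (R * M) i 0 = (R *ᵥ u) i := by
        simp [Matrix.mul_apply, Matrix.mulVec, dotProduct, hM]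
      rw [this, hu]
      simp [Matrix.mul_apply, Fin.sum_univ_three, hM, hD, Matrix.diagonal]
    · show (R * M) i 1 = (M * D) i 1
      have : (R * M) i 1 = (R *ᵥ v) i := by
        simp [Matrix.mul_apply, Matrix.mulVec, dotProduct, hM]
      rw [this, hv]
      simp [Matrix.mul_apply, Fin.sum_univ_three, hM, hD, Matrix.diagonal]
    · show (R * M) i 2 = (M * D) i 2
      have : (R * M) i 2 = (R *ᵥ w) i := by
        simp [Matrix.mul_apply, Matrix.mulVec, dotProduct, hM]
      rw [this, hzw]
      simp [Matrix.mul_apply, Fin.sum_univ_three, hM, hD, Matrix.diagonal]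
      ring
  have hdetD : D.det = a 2 := by
    rw [hD, Matrix.det_diagonal]
    simp [Fin.prod_univ_three]
  have ha2 : a 2 = 1 := by
    have h := congrArg Matrix.det hRM
    rw [Matrix.det_mul, Matrix.det_mul, hdet, hdetD, one_mul] at h
    have h2 : M.det * 1 = M.det * a 2 := by rw [mul_one]; exact h
    exact (mul_left_cancel₀ hMdet h2).symm
  have hD1 : D = 1 := by
    rw [hD, ha2, vec111_eq']
    exact Matrix.diagonal_one
  rw [hD1, mul_one] at hRM
  have hMM : M * M⁻¹ = 1 := Matrix.mul_nonsing_inv M hMunit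
  calc R = R * (M * M⁻¹) := by rw [hMM, mul_one]
    _ = (R * M) * M⁻¹ := by rw [mul_assoc]
    _ = M * M⁻¹ := by rw [hRM]
    _ = 1 := hMM

lemma fin4_val3' : ((3 : Fin 4) : ℕ) = 3 := rfl
lemma fin_cs2' : (Fin.castSucc (2 : Fin 3)) = (2 : Fin 4) := rfl

lemma toSE3_mulVec_three' (R : Matrix (Fin 3) (Fin 3) ℝ) (p : Fin 3 → ℝ) (x : Fin 4 → ℝ) :
    (toSE3 R p *ᵥ x) 3 = x 3 := by
  simp [toSE3, Matrix.mulVec, dotProduct, Fin.sum_univ_four, fin4_val3']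

lemma toSE3_fix' {R : Matrix (Fin 3) (Fin 3) ℝ} {p : Fin 3 → ℝ} {y : Fin 4 → ℝ}
    (h : toSE3 R p *ᵥ y = y) : R *ᵥ vbar y + y 3 • p = vbar y := by
  have h0 := congrFun h 0
  have h1 := congrFun h 1
  have h2 := congrFun h 2
  simp [toSE3, Matrix.mulVec, dotProduct, Fin.sum_univ_four, fin4_val3'] at h0 h1 h2
  funext i
  fin_cases i <;>
    simp [vbar, Matrix.mulVec, dotProduct, Fin.sum_univ_three, fin_cs2'] <;>
    [linarith [h0]; linarith [h1]; linarith [h2]]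

lemma exists_indep_pair_fixed' (R : Matrix (Fin 3) (Fin 3) ℝ) (S : Set (Fin 3 → ℝ))
    (hS : ∀ x ∈ S, R *ᵥ x = x) (h2 : 2 ≤ Module.finrank ℝ (Submodule.span ℝ S)) :
    ∃ u v : Fin 3 → ℝ, R *ᵥ u = u ∧ R *ᵥ v = v ∧ LinearIndependent ℝ ![u, v] := by
  set U : Submodule ℝ (Fin 3 → ℝ) := LinearMap.ker (R.mulVecLin - LinearMap.id) with hU
  have hmem : ∀ x, x ∈ U ↔ R *ᵥ x = x := by
    intro x
    rw [hU, LinearMap.mem_ker, LinearMap.sub_apply, LinearMap.id_apply, sub_eq_zero,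
      Matrix.mulVecLin_apply]
  have hle : Submodule.span ℝ S ≤ U := Submodule.span_le.2 fun x hx => (hmem x).2 (hS x hx)
  have h2' : 2 ≤ Module.finrank ℝ U := le_trans h2 (Submodule.finrank_mono hle)
  obtain ⟨f, hf⟩ := exists_linearIndependent_of_le_finrank h2'
  have hf' : LinearIndependent ℝ fun i => ((f i : Fin 3 → ℝ)) :=
    hf.map' U.subtype (Submodule.ker_subtype U)
  refine ⟨f 0, f 1, (hmem _).1 (f 0).2, (hmem _).1 (f 1).2, ?_⟩
  have : (![(f 0 : Fin 3 → ℝ), (f 1 : Fin 3 → ℝ)]) = fun i => ((f i : Fin 3 → ℝ)) := by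
    funext i; fin_cases i <;> rfl
  rw [this]
  exact hf'

lemma toSE3_one_zero : toSE3 (1 : Matrix (Fin 3) (Fin 3) ℝ) (0 : Fin 3 → ℝ) = 1 := by
  funext i j
  fin_cases i <;> fin_cases j <;>
    simp [toSE3, Matrix.one_apply] <;> rfl

/-- under Case 3 of the observability assumption (at least three position
measurements), the cost `V(E) = (1/2)Σᵢ kᵢ |Eẙᵢ/|Eẙᵢ| − ẙᵢ|²` vanishes iff `E = I₄`. -/
theorem lyapunov_unique_minimum_case3 {N : ℕ} (ystar : Fin N → Fin 4 → ℝ)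
    (hunit : ∀ i, enorm2 (ystar i) = 1) (k : Fin N → ℝ) (hk : ∀ i, 0 < k i)
    (j₁ j₂ j₃ : Fin N)
    (h4a : ystar j₁ 3 ≠ 0) (h4b : ystar j₂ 3 ≠ 0) (h4c : ystar j₃ 3 ≠ 0)
    (hli12 : LinearIndependent ℝ ![ystar j₁, ystar j₂])
    (hli23 : LinearIndependent ℝ ![ystar j₂, ystar j₃])
    (hli31 : LinearIndependent ℝ ![ystar j₃, ystar j₁])
    (hnotcol : 2 ≤ Module.finrank ℝ
      ↥(Submodule.span ℝ
        ({ystar j₂ 3 • vbar (ystar j₁) - ystar j₁ 3 • vbar (ystar j₂),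
          ystar j₃ 3 • vbar (ystar j₂) - ystar j₂ 3 • vbar (ystar j₃),
          ystar j₁ 3 • vbar (ystar j₃) - ystar j₃ 3 • vbar (ystar j₁)} : Set (Fin 3 → ℝ))))
    (E : Matrix (Fin 4) (Fin 4) ℝ) (hE : E ∈ SE3) :
    (1 / 2 : ℝ) * ∑ i, k i * (enorm2 (nrm (E *ᵥ ystar i) - ystar i)) ^ 2 = 0 ↔ E = 1 := by
  constructor
  · intro hV
    obtain ⟨R, p, hR, hEeq⟩ := hE
    have hsum : ∑ i, k i * (enorm2 (nrm (E *ᵥ ystar i) - ystar i)) ^ 2 = 0 := by linarith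
    have hzero : ∀ i, nrm (E *ᵥ ystar i) = ystar i := by
      intro i
      have h := (Finset.sum_eq_zero_iff_of_nonneg
        (fun i _ => mul_nonneg (hk i).le (sq_nonneg _))).1 hsum i (Finset.mem_univ i)
      have h2 : (enorm2 (nrm (E *ᵥ ystar i) - ystar i)) ^ 2 = 0 :=
        (mul_eq_zero.1 h).resolve_left (hk i).ne'
      have h3 : enorm2 (nrm (E *ᵥ ystar i) - ystar i) = 0 :=
        pow_eq_zero_iff two_ne_zero |>.1 h2
      have h4 := enorm2_eq_zero'.1 h3
      have := sub_eq_zero.1 h4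
      exact this
    have hfix : ∀ i, ystar i 3 ≠ 0 → E *ᵥ ystar i = ystar i := by
      intro i hi
      have hn := hzero i
      set lam := enorm2 (E *ᵥ ystar i) with hlamdef
      have hlam : lam ≠ 0 := by
        intro h0
        have hy0 : ystar i = 0 := by
          rw [← hn]
          unfold nrm
          rw [← hlamdef, h0]
          simp
        have := hunit i
        rw [hy0, enorm2_eq_zero'.2 rfl] at this
        exact zero_ne_one this
      have hEy : E *ᵥ ystar i = lam • ystar i := by
        have hls : lam • nrm (E *ᵥ ystar i) = E *ᵥ ystar i := by
          unfold nrm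
          rw [← hlamdef]
          exact smul_inv_smul₀ hlam _
        rw [← hls, hn]
      have hE3 : (E *ᵥ ystar i) 3 = ystar i 3 := by
        rw [hEeq]; exact toSE3_mulVec_three' R p (ystar i)
      have hlam1 : lam = 1 := by
        have h' := congrFun hEy 3
        rw [hE3] at h'
        simp only [Pi.smul_apply, smul_eq_mul] at h'
        have h'' : lam * ystar i 3 = 1 * ystar i 3 := by rw [one_mul]; exact h'.symm
        exact mul_right_cancel₀ hi h''
      rw [hlam1, one_smul] at hEy
      exact hEy
    have hf1 : toSE3 R p *ᵥ ystar j₁ = ystar j₁ := by rw [← hEeq]; exact hfix j₁ h4a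
    have hf2 : toSE3 R p *ᵥ ystar j₂ = ystar j₂ := by rw [← hEeq]; exact hfix j₂ h4b
    have hf3 : toSE3 R p *ᵥ ystar j₃ = ystar j₃ := by rw [← hEeq]; exact hfix j₃ h4c
    have g1 := toSE3_fix' hf1
    have g2 := toSE3_fix' hf2
    have g3 := toSE3_fix' hf3
    have key : ∀ (c d : ℝ) (x y : Fin 3 → ℝ),
        R *ᵥ x + c • p = x → R *ᵥ y + d • p = y →
        R *ᵥ (d • x - c • y) = d • x - c • y := by
      intro c d x y hx hy
      rw [Matrix.mulVec_sub, Matrix.mulVec_smul, Matrix.mulVec_smul]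
      funext l
      have hxl := congrFun hx l
      have hyl := congrFun hy l
      simp only [Pi.add_apply, Pi.smul_apply, Pi.sub_apply, smul_eq_mul] at hxl hyl ⊢
      linear_combination d * hxl - c * hyl
    have hfixS : ∀ x ∈ ({ystar j₂ 3 • vbar (ystar j₁) - ystar j₁ 3 • vbar (ystar j₂),
          ystar j₃ 3 • vbar (ystar j₂) - ystar j₂ 3 • vbar (ystar j₃),
          ystar j₁ 3 • vbar (ystar j₃) - ystar j₃ 3 • vbar (ystar j₁)} : Set (Fin 3 → ℝ)),
        R *ᵥ x = x := by
      intro x hx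
      rcases hx with rfl | rfl | rfl
      · exact key _ _ _ _ g1 g2
      · exact key _ _ _ _ g2 g3
      · exact key _ _ _ _ g3 g1
    obtain ⟨u, v, huf, hvf, hind⟩ := exists_indep_pair_fixed' R _ hfixS hnotcol
    have hR1 : R = 1 := so3_fix' hR huf hvf hind
    have hp : p = 0 := by
      have := g1
      rw [hR1, Matrix.one_mulVec] at this
      have h0 : ystar j₁ 3 • p = 0 := by
        have := congrArg (fun z => z - vbar (ystar j₁)) this
        simpa [add_sub_cancel_left] using this
      rcases smul_eq_zero.1 h0 with h | h
      · exact absurd h h4a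
      · exact h
    rw [hEeq, hR1, hp]
    exact toSE3_one_zero
  · intro h
    subst h
    have hz : ∀ i, nrm ((1 : Matrix (Fin 4) (Fin 4) ℝ) *ᵥ ystar i) - ystar i = 0 := by
      intro i
      rw [Matrix.one_mulVec]
      unfold nrm
      rw [hunit i]
      simp
    have : ∀ i ∈ Finset.univ, k i * (enorm2 (nrm ((1 : Matrix (Fin 4) (Fin 4) ℝ) *ᵥ ystar i) - ystar i)) ^ 2 = 0 := by
      intro i _
      rw [hz i, enorm2_eq_zero'.2 rfl]
      ring
    rw [Finset.sum_eq_zero this]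
    ring
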